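/- Certificate lower bound on the primal objective. Let Z_r = Σ_{ℓ=0}^{L−1} α_ℓ · u a(r_ℓ)^H with ‖u‖₂ = 1 and nonzero α_ℓ, let Z_c = Σ_{q=0}^{Q−1} β_q · w a(c_q)^H with ‖w‖₂ = 1 and nonzero β_q, and set y = א_r(Z_r) + א_c(Z_c). If q ∈ ℂ^(MP) satisfies א_r*(q) a(r_ℓ) = sign(α_ℓ) · u for every ℓ and א_c*(q) a(c_q) = sign(β_q) · w for every q, then ⟨q, y⟩_ℝ ≥ ‖Z_r‖_A + ‖Z_c‖_A. -/

import Mathlib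

open scoped BigOperators ComplexConjugate ENNReal Matrix

noncomputable section

namespace DBD

/-- Index set for `ℂ^(MP)` with `M = 2N+1`: pairs `v = (n,p)`,
`n ∈ {-N,…,N}` (encoded via `Fin (2N+1)` shifted by `N`) and `p ∈ {0,…,P-1}`. -/
abbrev Idx (N P : ℕ) := Fin (2 * N + 1) × Fin P

/-- The atom vector `a(r) ∈ ℂ^(MP)` with `[a(r)]_(n,p) = exp(2πi(τ n + ν p))`,
where the first index encodes `n = v.1 - N ∈ {-N,…,N}`. -/
def atom (N P : ℕ) (r : ℝ × ℝ) : Idx N P → ℂ := fun v =>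
  Complex.exp (2 * (Real.pi : ℂ) * Complex.I *
    ((r.1 : ℂ) * (((((v.1 : ℕ) : ℤ) - (N : ℤ)) : ℤ) : ℂ) + (r.2 : ℂ) * ((v.2 : ℕ) : ℂ)))

/-- The parameter domain `[0,1)²`. -/
def box : Set (ℝ × ℝ) := Set.Ico (0 : ℝ) 1 ×ˢ Set.Ico (0 : ℝ) 1

/-- The rank-one atom matrix `u a(r)ᴴ ∈ ℂ^(d×MP)`. -/
def atomMat (N P : ℕ) {d : ℕ} (u : Fin d → ℂ) (r : ℝ × ℝ) :
    Matrix (Fin d) (Idx N P) ℂ := fun i v => u i * conj (atom N P r v)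

/-- Euclidean (ℓ₂) norm on `ℂ^d`. -/
def enorm2 {d : ℕ} (x : Fin d → ℂ) : ℝ := Real.sqrt (∑ i, ‖x i‖ ^ 2)

/-- The atomic norm `‖Z‖_A ∈ [0,∞]`: infimum of `Σ_ℓ |α_ℓ|` over decompositions
`Z = Σ_ℓ α_ℓ · u a(r_ℓ)ᴴ` with a single unit-norm `u` and `r_ℓ ∈ [0,1)²`;
`+∞` (the infimum over the empty set) if no decomposition exists. -/
def anorm (N P : ℕ) {d : ℕ} (Z : Matrix (Fin d) (Idx N P) ℂ) : ℝ≥0∞ :=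
  sInf {x : ℝ≥0∞ | ∃ (L : ℕ) (α : Fin L → ℂ) (rs : Fin L → ℝ × ℝ) (u : Fin d → ℂ),
    enorm2 u = 1 ∧ (∀ ℓ, rs ℓ ∈ box) ∧
    Z = ∑ ℓ, α ℓ • atomMat N P u (rs ℓ) ∧
    x = ENNReal.ofReal (∑ ℓ, ‖α ℓ‖)}

/-- Standard inner product `⟨x,y⟩ = xᴴ y` on `ℂ^(MP)`. -/
def vinner (N P : ℕ) (x y : Idx N P → ℂ) : ℂ := ∑ v, conj (x v) * y v

/-- Frobenius inner product `⟨A,B⟩ = Tr(Aᴴ B)`. -/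
def finner {m n : Type*} [Fintype m] [Fintype n] (A B : Matrix m n ℂ) : ℂ :=
  (Aᴴ * B).trace

/-- `sign(c) = c / |c|` for complex `c`. -/
def csign (c : ℂ) : ℂ := c / (‖c‖ : ℂ)

/-- The trace-form measurement operator `[א(Z)]_v = Tr(G_v Z)`. -/
def aleph (N P : ℕ) {d : ℕ} (G : Idx N P → Matrix (Idx N P) (Fin d) ℂ)
    (Z : Matrix (Fin d) (Idx N P) ℂ) : Idx N P → ℂ := fun v => (G v * Z).trace

/-- The adjoint operator `א*(q) = Σ_v [q]_v G_vᴴ`. -/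
def alephAdj (N P : ℕ) {d : ℕ} (G : Idx N P → Matrix (Idx N P) (Fin d) ℂ)
    (q : Idx N P → ℂ) : Matrix (Fin d) (Idx N P) ℂ := ∑ v, q v • (G v)ᴴ

/-- The dual atomic norm `‖W‖*_A = sup{ ⟨U,W⟩_ℝ : ‖U‖_A ≤ 1 }`. -/
def dualNorm (N P : ℕ) {d : ℕ} (W : Matrix (Fin d) (Idx N P) ℂ) : ℝ :=
  sSup {x : ℝ | ∃ U : Matrix (Fin d) (Idx N P) ℂ, anorm N P U ≤ 1 ∧ x = (finner U W).re}

end DBD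

open DBD

section Helpers

open DBD

lemma anorm_le_sum (N P : ℕ) {d : ℕ} {L : ℕ} (α : Fin L → ℂ) (rs : Fin L → ℝ × ℝ)
    (u : Fin d → ℂ) (hu : enorm2 u = 1) (hrs : ∀ ℓ, rs ℓ ∈ box)
    (Z : Matrix (Fin d) (Idx N P) ℂ) (hZ : Z = ∑ ℓ, α ℓ • atomMat N P u (rs ℓ)) :
    anorm N P Z ≤ ENNReal.ofReal (∑ ℓ, ‖α ℓ‖) :=
  sInf_le ⟨L, α, rs, u, hu, hrs, hZ, rfl⟩

lemma vinner_aleph_eq (N P : ℕ) {d : ℕ} (G : Idx N P → Matrix (Idx N P) (Fin d) ℂ)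
    (q : Idx N P → ℂ) (Z : Matrix (Fin d) (Idx N P) ℂ) :
    vinner N P q (aleph N P G Z) = finner (alephAdj N P G q) Z := by
  unfold vinner aleph finner alephAdj
  rw [Matrix.conjTranspose_sum, Matrix.sum_mul, Matrix.trace_sum]
  refine Finset.sum_congr rfl fun v _ => ?_
  rw [Matrix.conjTranspose_smul, Matrix.smul_mul, Matrix.trace_smul,
    Matrix.conjTranspose_conjTranspose, smul_eq_mul]
  rfl

lemma finner_atomMat_eq (N P : ℕ) {d : ℕ} (W : Matrix (Fin d) (Idx N P) ℂ)
    (u : Fin d → ℂ) (r : ℝ × ℝ) :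
    finner W (atomMat N P u r) = ∑ i, conj (W.mulVec (atom N P r) i) * u i := by
  unfold finner Matrix.trace Matrix.mulVec dotProduct
  simp only [Matrix.diag, Matrix.mul_apply, atomMat, Matrix.conjTranspose_apply,
    map_sum, map_mul, Finset.sum_mul]
  rw [Finset.sum_comm]
  refine Finset.sum_congr rfl fun i _ => Finset.sum_congr rfl fun v _ => ?_
  rw [show (starRingEnd ℂ) (W i v) = star (W i v) from rfl]
  ring

lemma sum_conj_mul_self {d : ℕ} (u : Fin d → ℂ) (hu : enorm2 u = 1) :
    ∑ i, conj (u i) * u i = 1 := by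
  have h0 : 0 ≤ ∑ i, ‖u i‖ ^ 2 :=
    Finset.sum_nonneg fun i _ => sq_nonneg _
  have h1 : ∑ i, ‖u i‖ ^ 2 = 1 := by
    unfold enorm2 at hu
    nlinarith [Real.sq_sqrt h0]
  calc ∑ i, conj (u i) * u i = ((∑ i, ‖u i‖ ^ 2 : ℝ) : ℂ) := by
        push_cast
        refine Finset.sum_congr rfl fun i _ => ?_
        rw [mul_comm, Complex.mul_conj, Complex.normSq_eq_norm_sq]
        push_cast; ring
    _ = 1 := by rw [h1]; norm_num

lemma mul_conj_csign {c : ℂ} (hc : c ≠ 0) :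
    c * conj (csign c) = ((‖c‖ : ℝ) : ℂ) := by
  have habs : (‖c‖ : ℂ) ≠ 0 := by
    simpa using (norm_ne_zero_iff.mpr hc)
  unfold csign
  rw [map_div₀, Complex.conj_ofReal, mul_div_assoc', Complex.mul_conj,
    Complex.normSq_eq_norm_sq]
  push_cast
  field_simp

lemma finner_decomp (N P : ℕ) {d : ℕ} {L : ℕ} (W : Matrix (Fin d) (Idx N P) ℂ)
    (α : Fin L → ℂ) (rs : Fin L → ℝ × ℝ) (u : Fin d → ℂ)
    (hu : enorm2 u = 1) (hα : ∀ ℓ, α ℓ ≠ 0)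
    (hW : ∀ ℓ, W.mulVec (atom N P (rs ℓ)) = csign (α ℓ) • u) :
    finner W (∑ ℓ, α ℓ • atomMat N P u (rs ℓ))
      = ((∑ ℓ, ‖α ℓ‖ : ℝ) : ℂ) := by
  have hlin : finner W (∑ ℓ, α ℓ • atomMat N P u (rs ℓ))
      = ∑ ℓ, α ℓ * finner W (atomMat N P u (rs ℓ)) := by
    unfold finner
    rw [Matrix.mul_sum, Matrix.trace_sum]
    refine Finset.sum_congr rfl fun ℓ _ => ?_
    rw [Matrix.mul_smul, Matrix.trace_smul, smul_eq_mul]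
  rw [hlin]
  push_cast
  refine Finset.sum_congr rfl fun ℓ _ => ?_
  rw [finner_atomMat_eq, hW ℓ]
  simp only [Pi.smul_apply, smul_eq_mul, map_mul, mul_assoc]
  rw [← Finset.mul_sum, sum_conj_mul_self u hu, mul_one, mul_conj_csign (hα ℓ)]

end Helpers

/-- **Certificate lower bound on the primal objective:** under the interpolation
conditions of the dual certificate, `⟨q, y⟩_ℝ ≥ ‖Z_r‖_A + ‖Z_c‖_A`. -/
theorem certificate_lower_bound
    (N P J : ℕ) (hN : 0 < N) (hP : 0 < P) (hJ : 0 < J) (L Q : ℕ)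
    (G : Idx N P → Matrix (Idx N P) (Fin J) ℂ)
    (A : Idx N P → Matrix (Idx N P) (Fin (P * J)) ℂ)
    (α : Fin L → ℂ) (rs : Fin L → ℝ × ℝ) (u : Fin J → ℂ)
    (β : Fin Q → ℂ) (cs : Fin Q → ℝ × ℝ) (w : Fin (P * J) → ℂ)
    (hu : enorm2 u = 1) (hw : enorm2 w = 1)
    (hα : ∀ ℓ, α ℓ ≠ 0) (hβ : ∀ k, β k ≠ 0)
    (hrs : ∀ ℓ, rs ℓ ∈ box) (hcs : ∀ k, cs k ∈ box)
    (Zr : Matrix (Fin J) (Idx N P) ℂ) (Zc : Matrix (Fin (P * J)) (Idx N P) ℂ)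
    (hZr : Zr = ∑ ℓ, α ℓ • atomMat N P u (rs ℓ))
    (hZc : Zc = ∑ k, β k • atomMat N P w (cs k))
    (y : Idx N P → ℂ)
    (hy : y = fun v => aleph N P G Zr v + aleph N P A Zc v)
    (q : Idx N P → ℂ)
    (hfr_interp : ∀ ℓ, (alephAdj N P G q).mulVec (atom N P (rs ℓ)) = csign (α ℓ) • u)
    (hfc_interp : ∀ k, (alephAdj N P A q).mulVec (atom N P (cs k)) = csign (β k) • w) :
    anorm N P Zr + anorm N P Zc ≤ ENNReal.ofReal ((vinner N P q y).re) := by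
  have hWr := vinner_aleph_eq N P G q Zr
  have hWc := vinner_aleph_eq N P A q Zc
  have hr : finner (alephAdj N P G q) Zr = ((∑ ℓ, ‖α ℓ‖ : ℝ) : ℂ) := by
    rw [hZr]; exact finner_decomp N P _ α rs u hu hα hfr_interp
  have hc : finner (alephAdj N P A q) Zc = ((∑ k, ‖β k‖ : ℝ) : ℂ) := by
    rw [hZc]; exact finner_decomp N P _ β cs w hw hβ hfc_interp
  have hsplit : vinner N P q y
      = vinner N P q (aleph N P G Zr) + vinner N P q (aleph N P A Zc) := by
    subst hy
    unfold vinner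
    rw [← Finset.sum_add_distrib]
    exact Finset.sum_congr rfl fun v _ => by ring
  have hkey : (vinner N P q y).re
      = (∑ ℓ, ‖α ℓ‖) + (∑ k, ‖β k‖) := by
    rw [hsplit, hWr, hWc, hr, hc, ← Complex.ofReal_add, Complex.ofReal_re]
  rw [hkey, ENNReal.ofReal_add (Finset.sum_nonneg fun ℓ _ => norm_nonneg _)
    (Finset.sum_nonneg fun k _ => norm_nonneg _)]
  exact add_le_add (anorm_le_sum N P α rs u hu hrs Zr hZr)
    (anorm_le_sum N P β cs w hw hcs Zc hZc)
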